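/- arXiv:2307.02130 — 2 statements merged into one kernel-verified Lean document; each statement's English description precedes it below -/
import Mathlib

section
/- Let Θ̂ be a symmetric positive definite matrix that minimizes Φ(·, λ) over the set of symmetric positive definite p×p matrices. Then for every γ > 0 and all indices i, j, the fixed-point equation Θ̂_{ij} = ST(Θ̂_{ij} − γ(S_{ij} − (Θ̂⁻¹)_{ij}), λγ) holds. -/
open Matrix Polynomial

/-- The GLASSO objective `Φ(Θ, λ) = −log det Θ + ⟨S, Θ⟩ + λ ‖Θ‖₁`. -/
noncomputable def glassoObj {p : ℕ} (S Θ : Matrix (Fin p) (Fin p) ℝ) (lam : ℝ) : ℝ :=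
  -Real.log Θ.det + (∑ i, ∑ j, S i j * Θ i j) + lam * ∑ i, ∑ j, |Θ i j|

/-- The soft-thresholding operator `ST(z, τ) = sign(z) · max(|z| − τ, 0)`. -/
noncomputable def softThresh (z τ : ℝ) : ℝ :=
  Real.sign z * max (|z| - τ) 0

lemma st_fixed (u d lam γ : ℝ) (hlam : 0 < lam) (hγ : 0 < γ)
    (h1 : 0 < u → d = -lam) (h2 : u < 0 → d = lam) (h3 : u = 0 → |d| ≤ lam) :
    u = softThresh (u - γ * d) (lam * γ) := by
  unfold softThresh
  rcases lt_trichotomy u 0 with h | h | h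
  · rw [h2 h]
    have hz : u - γ * lam < 0 := by nlinarith
    rw [Real.sign_of_neg hz, abs_of_neg hz]
    rw [max_eq_left (by nlinarith)]
    ring
  · rw [h]
    have hd := h3 h
    have : |0 - γ * d| - lam * γ ≤ 0 := by
      rw [zero_sub, abs_neg, abs_mul, abs_of_pos hγ]
      nlinarith [abs_nonneg d]
    rw [max_eq_right this, mul_zero]
  · rw [h1 h]
    have hz : 0 < u - γ * (-lam) := by nlinarith
    rw [Real.sign_of_pos hz, abs_of_pos hz]
    rw [max_eq_left (by nlinarith)]
    ring

/-- Sum of an indicator-supported function over all pairs. -/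
lemma sum_indicator_pair {p : ℕ} (i j : Fin p) (f : Fin p → Fin p → ℝ) :
    ∑ a, ∑ b, (if (a = i ∧ b = j) ∨ (a = j ∧ b = i) then f a b else 0) =
      if i = j then f i i else f i j + f j i := by
  rcases eq_or_ne i j with h | h
  · subst h
    simp only [if_pos rfl, or_self]
    rw [Finset.sum_eq_single i]
    · rw [Finset.sum_eq_single i]
      · simp
      · intro b _ hb; simp [hb]
      · simp
    · intro a _ ha
      apply Finset.sum_eq_zero
      intro b _
      simp [ha]
    · simp
  · rw [if_neg h]
    have key : ∀ a, ∑ b, (if (a = i ∧ b = j) ∨ (a = j ∧ b = i) then f a b else 0) =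
        (if a = i then f a j else 0) + (if a = j then f a i else 0) := by
      intro a
      rcases eq_or_ne a i with hai | hai
      · subst hai
        rw [if_pos rfl, if_neg h]
        rw [Finset.sum_eq_single j]
        · simp [h]
        · intro b _ hb
          simp only [ite_eq_right_iff]
          rintro (⟨-, h2⟩ | ⟨h1, -⟩)
          · exact absurd h2 hb
          · exact absurd h1 h
        · simp
      · rcases eq_or_ne a j with haj | haj
        · subst haj
          rw [if_neg hai, if_pos rfl]
          rw [Finset.sum_eq_single i]
          · simp [hai]
          · intro b _ hb
            simp only [ite_eq_right_iff]
            rintro (⟨h1, -⟩ | ⟨-, h2⟩)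
            · exact absurd h1 hai
            · exact absurd h2 hb
          · simp
        · rw [if_neg hai, if_neg haj]
          simp only [add_zero]
          apply Finset.sum_eq_zero
          intro b _
          simp [hai, haj]
    simp only [key]
    rw [Finset.sum_add_distrib]
    rw [Finset.sum_ite_eq' Finset.univ i (fun a => f a j),
        Finset.sum_ite_eq' Finset.univ j (fun a => f a i)]
    simp

/-- A positive definite matrix has a uniform quadratic-form lower bound. -/
lemma posdef_lower {p : ℕ} (hp : 1 ≤ p) (Θ : Matrix (Fin p) (Fin p) ℝ) (hΘ : Θ.PosDef) :
    ∃ m > 0, ∀ x : Fin p → ℝ, m * (∑ k, x k ^ 2) ≤ x ⬝ᵥ Θ *ᵥ x := by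
  haveI : Nonempty (Fin p) := ⟨⟨0, hp⟩⟩
  have hpos : ∀ x : Fin p → ℝ, x ≠ 0 → 0 < x ⬝ᵥ Θ *ᵥ x := by
    intro x hx
    have := hΘ.dotProduct_mulVec_pos hx
    simpa using this
  set Q : EuclideanSpace ℝ (Fin p) → ℝ :=
    fun x => (fun y : Fin p → ℝ => y ⬝ᵥ Θ *ᵥ y) ((EuclideanSpace.equiv (Fin p) ℝ) x) with hQ
  have hQcont : Continuous Q := by
    have h1 : Continuous (fun y : Fin p → ℝ => y ⬝ᵥ Θ *ᵥ y) := by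
      simp only [dotProduct, Matrix.mulVec]
      exact continuous_finset_sum _ fun a _ =>
        (continuous_apply a).mul (continuous_finset_sum _ fun b _ =>
          continuous_const.mul (continuous_apply b))
    exact h1.comp (EuclideanSpace.equiv (Fin p) ℝ).continuous
  have hsne : (Metric.sphere (0 : EuclideanSpace ℝ (Fin p)) 1).Nonempty :=
    NormedSpace.sphere_nonempty.mpr zero_le_one
  obtain ⟨x0, hx0mem, hx0min'⟩ :=
    (isCompact_sphere (0 : EuclideanSpace ℝ (Fin p)) 1).exists_isMinOn hsne
      hQcont.continuousOn
  have hx0min : ∀ y ∈ Metric.sphere (0 : EuclideanSpace ℝ (Fin p)) 1, Q x0 ≤ Q y :=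
    fun y hy => hx0min' hy
  have hx0ne : (x0 : Fin p → ℝ) ≠ 0 := by
    intro h
    have : ‖x0‖ = 1 := mem_sphere_zero_iff_norm.mp hx0mem
    rw [show x0 = 0 by ext k; simpa using congrFun h k] at this
    simp at this
  refine ⟨Q x0, hpos _ hx0ne, ?_⟩
  intro x
  by_cases hx : x = 0
  · simp [hx]
  · set r : ℝ := Real.sqrt (∑ k, x k ^ 2) with hr
    have hsum : 0 < ∑ k, x k ^ 2 := by
      have : ∃ k, x k ≠ 0 := by
        by_contra h
        push_neg at h
        exact hx (funext h)
      obtain ⟨k, hk⟩ := this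
      have h1 : (0:ℝ) < x k ^ 2 := by positivity
      exact lt_of_lt_of_le h1 (Finset.single_le_sum (f := fun k => x k ^ 2)
        (fun i _ => by positivity) (Finset.mem_univ k))
    have hrpos : 0 < r := Real.sqrt_pos.mpr hsum
    have hr2 : r ^ 2 = ∑ k, x k ^ 2 := Real.sq_sqrt hsum.le
    set y : EuclideanSpace ℝ (Fin p) := (EuclideanSpace.equiv (Fin p) ℝ).symm (r⁻¹ • x) with hy
    have hyk : ∀ k, y k = r⁻¹ * x k := by
      intro k; rfl
    have hynorm : ‖y‖ = 1 := by
      rw [EuclideanSpace.norm_eq]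
      have : ∑ k, ‖y k‖ ^ 2 = 1 := by
        simp only [hyk, Real.norm_eq_abs, sq_abs, mul_pow]
        rw [← Finset.mul_sum, ← hr2]
        field_simp
      rw [this, Real.sqrt_one]
    have hmem : y ∈ Metric.sphere (0 : EuclideanSpace ℝ (Fin p)) 1 :=
      mem_sphere_zero_iff_norm.mpr hynorm
    have := hx0min y hmem
    have hQy : Q y = r⁻¹ * (r⁻¹ * (x ⬝ᵥ Θ *ᵥ x)) := by
      show (r⁻¹ • x) ⬝ᵥ Θ *ᵥ (r⁻¹ • x) = _
      rw [Matrix.mulVec_smul, smul_dotProduct, dotProduct_smul]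
      simp [smul_eq_mul]
    rw [hQy] at this
    have h2 : Q x0 * r ^ 2 ≤ x ⬝ᵥ Θ *ᵥ x := by
      have hr2pos : 0 < r ^ 2 := by positivity
      calc Q x0 * r ^ 2 ≤ (r⁻¹ * (r⁻¹ * (x ⬝ᵥ Θ *ᵥ x))) * r ^ 2 :=
            mul_le_mul_of_nonneg_right this hr2pos.le
        _ = (x ⬝ᵥ Θ *ᵥ x) * ((r⁻¹ * r) * (r⁻¹ * r)) := by ring
        _ = x ⬝ᵥ Θ *ᵥ x := by rw [inv_mul_cancel₀ hrpos.ne']; ring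
    rw [← hr2]; exact h2

/-- Positive definiteness is stable under small symmetric perturbations
with a uniform quadratic-form bound. -/
lemma posdef_perturb {p : ℕ} (Θ H : Matrix (Fin p) (Fin p) ℝ)
    (hΘ : Θ.PosDef) (hH : H.IsHermitian)
    (hlow' : ∃ m > 0, ∀ x : Fin p → ℝ, m * (∑ k, x k ^ 2) ≤ x ⬝ᵥ Θ *ᵥ x)
    (hb : ∀ x : Fin p → ℝ, |x ⬝ᵥ H *ᵥ x| ≤ 2 * ∑ k, x k ^ 2) :
    ∃ δ > 0, ∀ t : ℝ, |t| < δ → (Θ + t • H).PosDef := by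
  obtain ⟨m, hm, hlow⟩ := hlow'
  refine ⟨m / 2, by positivity, fun t ht => ?_⟩
  refine Matrix.PosDef.of_dotProduct_mulVec_pos ?_ ?_
  · exact hΘ.1.add
      (by simpa [Matrix.IsHermitian, Matrix.conjTranspose_smul] using congrArg (t • ·) hH.eq)
  · intro x hx
    have hsum : 0 < ∑ k, x k ^ 2 := by
      have : ∃ k, x k ≠ 0 := by
        by_contra h; push_neg at h; exact hx (funext h)
      obtain ⟨k, hk⟩ := this
      exact lt_of_lt_of_le (by positivity)
        (Finset.single_le_sum (f := fun k => x k ^ 2) (fun i _ => by positivity)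
          (Finset.mem_univ k))
    have hq : x ⬝ᵥ (Θ + t • H) *ᵥ x = x ⬝ᵥ Θ *ᵥ x + t * (x ⬝ᵥ H *ᵥ x) := by
      rw [Matrix.add_mulVec, dotProduct_add, Matrix.smul_mulVec,
        dotProduct_smul, smul_eq_mul]
    have habs : |t * (x ⬝ᵥ H *ᵥ x)| ≤ |t| * (2 * ∑ k, x k ^ 2) := by
      rw [abs_mul]
      exact mul_le_mul_of_nonneg_left (hb x) (abs_nonneg t)
    have h2 : |t| * (2 * ∑ k, x k ^ 2) < m * ∑ k, x k ^ 2 := by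
      nlinarith [abs_nonneg t]
    have h3 : -(m * ∑ k, x k ^ 2) < t * (x ⬝ᵥ H *ᵥ x) := by
      have := neg_abs_le (t * (x ⬝ᵥ H *ᵥ x))
      linarith
    have h4 : m * ∑ k, x k ^ 2 ≤ x ⬝ᵥ Θ *ᵥ x := hlow x
    have : 0 < x ⬝ᵥ (Θ + t • H) *ᵥ x := by rw [hq]; linarith
    simpa using this

/-- Derivative of `t ↦ det (1 + t • M)` at `0` is the trace of `M`. -/
lemma det_deriv {p : ℕ} (M : Matrix (Fin p) (Fin p) ℝ) :
    HasDerivAt (fun t : ℝ => (1 + t • M).det) M.trace 0 := by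
  have h : (fun t : ℝ => (1 + t • M).det) = fun t =>
      1 + M.trace * t +
        (Matrix.det (1 + (Polynomial.X : ℝ[X]) • M.map Polynomial.C)).divX.divX.eval t * t ^ 2 := by
    funext t
    exact Matrix.det_one_add_smul t M
  rw [h]
  set P := (Matrix.det (1 + (Polynomial.X : ℝ[X]) • M.map Polynomial.C)).divX.divX
  have h1 : HasDerivAt (fun t : ℝ => 1 + M.trace * t) M.trace 0 := by
    simpa using ((hasDerivAt_id (0:ℝ)).const_mul M.trace).const_add 1
  have h2 : HasDerivAt (fun t : ℝ => P.eval t * t ^ 2)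
      (P.derivative.eval 0 * 0 ^ 2 + P.eval 0 * (2 * 0 ^ 1)) 0 :=
    (P.hasDerivAt 0).mul (hasDerivAt_pow 2 0)
  have := h1.add h2
  norm_num at this
  exact this

set_option maxHeartbeats 2000000 in
theorem stmt_4 {p : ℕ} (hp : 1 ≤ p) (S : Matrix (Fin p) (Fin p) ℝ) (hS : S.IsSymm)
    (lam : ℝ) (hlam : 0 < lam)
    (Θhat : Matrix (Fin p) (Fin p) ℝ) (hΘ : Θhat.PosDef)
    (hmin : ∀ Θ : Matrix (Fin p) (Fin p) ℝ, Θ.PosDef →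
      glassoObj S Θhat lam ≤ glassoObj S Θ lam) :
    ∀ γ : ℝ, 0 < γ → ∀ i j,
      Θhat i j = softThresh (Θhat i j - γ * (S i j - Θhat⁻¹ i j)) (lam * γ) := by
  intro γ hγ i j
  -- symmetry facts
  have hSsymm : S j i = S i j := by
    have := congrFun (congrFun hS i) j
    simpa [Matrix.transpose_apply] using this
  have husymm : Θhat j i = Θhat i j := by
    have := congrFun (congrFun hΘ.1 i) j
    simpa [Matrix.conjTranspose_apply] using this
  have hinvsymm : Θhat⁻¹ j i = Θhat⁻¹ i j := by
    have := congrFun (congrFun hΘ.1.inv i) j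
    simpa [Matrix.conjTranspose_apply] using this
  -- the perturbation direction
  set c : ℝ := if i = j then 1 else 2 with hc_def
  have hc : 0 < c := by
    rw [hc_def]; split_ifs <;> norm_num
  set H : Matrix (Fin p) (Fin p) ℝ :=
    Matrix.of (fun a b => if (a = i ∧ b = j) ∨ (a = j ∧ b = i) then (1:ℝ) else 0) with hH_def
  have hHapp : ∀ a b, H a b = if (a = i ∧ b = j) ∨ (a = j ∧ b = i) then (1:ℝ) else 0 :=
    fun a b => rfl
  have hH : H.IsHermitian := by
    ext a b
    simp only [Matrix.conjTranspose_apply, hHapp, star_trivial]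
    congr 1
    · simp only [eq_iff_iff]; tauto
  -- the weighted indicator sum
  have hcongr : ∀ f : Fin p → Fin p → ℝ, f i j = f j i →
      (∑ a, ∑ b, (if (a = i ∧ b = j) ∨ (a = j ∧ b = i) then f a b else 0)) = c * f i j := by
    intro f hf
    rw [sum_indicator_pair]
    rcases eq_or_ne i j with h | h
    · subst h; rw [if_pos rfl, hc_def, if_pos rfl, one_mul]
    · rw [if_neg h, hc_def, if_neg h, ← hf]; ring
  -- quadratic form bound for the direction
  have hb : ∀ x : Fin p → ℝ, |x ⬝ᵥ H *ᵥ x| ≤ 2 * ∑ k, x k ^ 2 := by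
    intro x
    have hquad : x ⬝ᵥ H *ᵥ x = c * (x i * x j) := by
      have : x ⬝ᵥ H *ᵥ x
          = ∑ a, ∑ b, (if (a = i ∧ b = j) ∨ (a = j ∧ b = i) then x a * x b else 0) := by
        simp only [dotProduct, Matrix.mulVec, hHapp]
        congr 1
        funext a
        rw [Finset.mul_sum]
        congr 1
        funext b
        split_ifs <;> ring
      rw [this, hcongr (fun a b => x a * x b) (by ring)]
    rw [hquad]
    have h1 : x i ^ 2 ≤ ∑ k, x k ^ 2 :=
      Finset.single_le_sum (f := fun k => x k ^ 2) (fun k _ => by positivity) (Finset.mem_univ i)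
    have h2 : x j ^ 2 ≤ ∑ k, x k ^ 2 :=
      Finset.single_le_sum (f := fun k => x k ^ 2) (fun k _ => by positivity) (Finset.mem_univ j)
    have hcle : |c| ≤ 2 := by rw [hc_def]; split_ifs <;> norm_num
    rw [abs_mul]
    have h3 : |x i * x j| ≤ ∑ k, x k ^ 2 := by
      rw [abs_mul]
      nlinarith [sq_nonneg (|x i| - |x j|), sq_abs (x i), sq_abs (x j),
        abs_nonneg (x i), abs_nonneg (x j)]
    nlinarith [abs_nonneg (x i * x j), abs_nonneg c]
  -- positive definiteness of perturbations
  obtain ⟨δ, hδ, hpd⟩ :=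
    posdef_perturb Θhat H hΘ hH (posdef_lower hp Θhat hΘ) hb
  -- factorization of the determinant
  have hdetpos := hΘ.det_pos
  set M : Matrix (Fin p) (Fin p) ℝ := Θhat⁻¹ * H with hM_def
  have hfact : ∀ t : ℝ, Θhat + t • H = Θhat * (1 + t • M) := by
    intro t
    rw [Matrix.mul_add, Matrix.mul_one, Matrix.mul_smul, hM_def, ← Matrix.mul_assoc,
      Matrix.mul_nonsing_inv _ hdetpos.ne'.isUnit, Matrix.one_mul]
  have hdet : ∀ t : ℝ, (Θhat + t • H).det = Θhat.det * (1 + t • M).det := by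
    intro t; rw [hfact t, Matrix.det_mul]
  -- trace of M
  have htr : M.trace = c * Θhat⁻¹ i j := by
    have : M.trace = ∑ a, ∑ b, (if (a = i ∧ b = j) ∨ (a = j ∧ b = i)
        then Θhat⁻¹ a b else 0) := by
      rw [Matrix.trace]
      simp only [Matrix.diag, hM_def, Matrix.mul_apply, hHapp]
      congr 1
      funext a
      congr 1
      funext b
      have hiff : ((b = i ∧ a = j) ∨ (b = j ∧ a = i)) ↔ ((a = i ∧ b = j) ∨ (a = j ∧ b = i)) := by
        tauto
      rw [if_congr hiff rfl rfl]
      split_ifs <;> ring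
    rw [this, hcongr _ hinvsymm.symm]
  -- derivative of the log-determinant part
  have hφ : HasDerivAt (fun t : ℝ => (1 + t • M).det) M.trace 0 := det_deriv M
  have hφ0 : (fun t : ℝ => (1 + t • M).det) 0 = 1 := by simp
  have hlog : HasDerivAt (fun t : ℝ => Real.log ((Θhat + t • H).det)) M.trace 0 := by
    have hcomp : HasDerivAt (fun t : ℝ => Real.log ((1 + t • M).det)) M.trace 0 := by
      have := (Real.hasDerivAt_log (by simp : ((1:Matrix (Fin p) (Fin p) ℝ) + (0:ℝ) • M).det ≠ 0)).comp 0 hφ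
      simp at this
      exact this
    have hcomp2 : HasDerivAt (fun t : ℝ => Real.log Θhat.det + Real.log ((1 + t • M).det))
        M.trace 0 := hcomp.const_add _
    apply hcomp2.congr_of_eventuallyEq
    have hball : Metric.ball (0:ℝ) δ ∈ nhds (0:ℝ) := Metric.ball_mem_nhds 0 hδ
    filter_upwards [hball] with t ht
    have habs : |t| < δ := by simpa [Real.dist_eq] using ht
    have hpdt := hpd t habs
    have hdetpos' : 0 < (Θhat + t • H).det := hpdt.det_pos
    have hφpos : 0 < (1 + t • M).det := by
      have := hdet t
      nlinarith
    rw [hdet t, Real.log_mul hdetpos.ne' hφpos.ne']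
  -- the smooth part and its derivative
  set s : ℝ → ℝ := fun t => -Real.log ((Θhat + t • H).det) + t * (c * S i j) with hs_def
  have hd : HasDerivAt s (c * (S i j - Θhat⁻¹ i j)) 0 := by
    have h1 : HasDerivAt (fun t : ℝ => t * (c * S i j)) (c * S i j) 0 :=
      hasDerivAt_mul_const _
    have := (hlog.neg).add h1
    rw [htr] at this
    rw [show c * (S i j - Θhat⁻¹ i j) = -(c * Θhat⁻¹ i j) + c * S i j by ring]
    exact this
  -- objective value decomposition
  have hlin : ∀ t : ℝ, (∑ a, ∑ b, S a b * (Θhat + t • H) a b)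
      = (∑ a, ∑ b, S a b * Θhat a b) + t * (c * S i j) := by
    intro t
    have hterm : ∀ a b, S a b * (Θhat + t • H) a b
        = S a b * Θhat a b + t * (if (a = i ∧ b = j) ∨ (a = j ∧ b = i) then S a b else 0) := by
      intro a b
      simp only [Matrix.add_apply, Matrix.smul_apply, hHapp, smul_eq_mul]
      split_ifs <;> ring
    simp only [hterm, Finset.sum_add_distrib, ← Finset.mul_sum]
    rw [hcongr S hSsymm.symm]
  have habs2 : ∀ t : ℝ, (∑ a, ∑ b, |(Θhat + t • H) a b|)
      = (∑ a, ∑ b, |Θhat a b|) + c * (|Θhat i j + t| - |Θhat i j|) := by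
    intro t
    have hterm : ∀ a b, |(Θhat + t • H) a b|
        = |Θhat a b| + (if (a = i ∧ b = j) ∨ (a = j ∧ b = i)
            then |Θhat a b + t| - |Θhat a b| else 0) := by
      intro a b
      simp only [Matrix.add_apply, Matrix.smul_apply, hHapp, smul_eq_mul]
      split_ifs <;> ring_nf
    simp only [hterm, Finset.sum_add_distrib]
    rw [hcongr (fun a b => |Θhat a b + t| - |Θhat a b|)
      (by show |Θhat i j + t| - |Θhat i j| = |Θhat j i + t| - |Θhat j i|; rw [husymm])]
  set u : ℝ := Θhat i j with hu_def
  -- key inequality from minimality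
  have hobj : ∀ t : ℝ, glassoObj S (Θhat + t • H) lam
      = s t + ((∑ a, ∑ b, S a b * Θhat a b) + lam * ∑ a, ∑ b, |Θhat a b|)
        + lam * (c * (|u + t| - |u|)) := by
    intro t
    unfold glassoObj
    rw [hlin t, habs2 t, hs_def]
    ring
  have hobj0 : glassoObj S Θhat lam
      = s 0 + ((∑ a, ∑ b, S a b * Θhat a b) + lam * ∑ a, ∑ b, |Θhat a b|) := by
    unfold glassoObj
    rw [hs_def]
    simp only [zero_smul, add_zero, zero_mul]
    ring
  have hkey : ∀ t : ℝ, |t| < δ → s 0 ≤ s t + lam * (c * (|u + t| - |u|)) := by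
    intro t ht
    have := hmin _ (hpd t ht)
    rw [hobj t, hobj0] at this
    linarith
  -- case analysis
  have hfinal : (0 < u → S i j - Θhat⁻¹ i j = -lam) ∧ (u < 0 → S i j - Θhat⁻¹ i j = lam)
      ∧ (u = 0 → |S i j - Θhat⁻¹ i j| ≤ lam) := by
    refine ⟨?_, ?_, ?_⟩
    · intro hu
      have hloc : IsLocalMin (fun t => s t + lam * c * t) 0 := by
        have hball : Metric.ball (0:ℝ) (min δ u) ∈ nhds (0:ℝ) :=
          Metric.ball_mem_nhds 0 (lt_min hδ hu)
        filter_upwards [hball] with t ht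
        have habs : |t| < min δ u := by simpa [Real.dist_eq] using ht
        have h1 : |t| < δ := lt_of_lt_of_le habs (min_le_left _ _)
        have h2 : |t| < u := lt_of_lt_of_le habs (min_le_right _ _)
        have h3 : |u + t| = u + t := by
          rw [abs_of_pos]
          cases abs_lt.mp h2 with
          | intro hl hr => linarith
        have hk := hkey t h1
        rw [h3, abs_of_pos hu] at hk
        simp only [mul_zero, add_zero]
        nlinarith
      have hd2 : HasDerivAt (fun t => s t + lam * c * t) (c * (S i j - Θhat⁻¹ i j) + lam * c) 0 := by
        have h1 : HasDerivAt (fun t : ℝ => lam * c * t) (lam * c) 0 := by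
          simpa using (hasDerivAt_id (0:ℝ)).const_mul (lam * c)
        exact hd.add h1
      have hzero := hloc.hasDerivAt_eq_zero hd2
      have h5 : c * (S i j - Θhat⁻¹ i j) = c * (-lam) := by linear_combination hzero
      exact mul_left_cancel₀ hc.ne' h5
    · intro hu
      have hloc : IsLocalMin (fun t => s t - lam * c * t) 0 := by
        have hball : Metric.ball (0:ℝ) (min δ (-u)) ∈ nhds (0:ℝ) :=
          Metric.ball_mem_nhds 0 (lt_min hδ (by linarith))
        filter_upwards [hball] with t ht
        have habs : |t| < min δ (-u) := by simpa [Real.dist_eq] using ht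
        have h1 : |t| < δ := lt_of_lt_of_le habs (min_le_left _ _)
        have h2 : |t| < -u := lt_of_lt_of_le habs (min_le_right _ _)
        have h3 : |u + t| = -(u + t) := by
          rw [abs_of_neg]
          cases abs_lt.mp h2 with
          | intro hl hr => linarith
        have hk := hkey t h1
        rw [h3, abs_of_neg hu] at hk
        simp only [mul_zero, sub_zero]
        nlinarith
      have hd2 : HasDerivAt (fun t => s t - lam * c * t) (c * (S i j - Θhat⁻¹ i j) - lam * c) 0 := by
        have h1 : HasDerivAt (fun t : ℝ => lam * c * t) (lam * c) 0 := by
          simpa using (hasDerivAt_id (0:ℝ)).const_mul (lam * c)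
        exact hd.sub h1
      have hzero := hloc.hasDerivAt_eq_zero hd2
      have h5 : c * (S i j - Θhat⁻¹ i j) = c * lam := by linear_combination hzero
      exact mul_left_cancel₀ hc.ne' h5
    · intro hu
      set d : ℝ := c * (S i j - Θhat⁻¹ i j) with hdd
      have hslope : Filter.Tendsto (slope s 0) (nhdsWithin 0 {(0:ℝ)}ᶜ) (nhds d) :=
        hasDerivAt_iff_tendsto_slope.mp hd
      have hge : -(lam * c) ≤ d := by
        have hmono : nhdsWithin (0:ℝ) (Set.Ioi 0) ≤ nhdsWithin 0 {(0:ℝ)}ᶜ :=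
          nhdsWithin_mono 0 (fun x hx => ne_of_gt hx)
        refine ge_of_tendsto (hslope.mono_left hmono) ?_
        filter_upwards [Ioo_mem_nhdsGT_of_mem (Set.left_mem_Ico.mpr hδ)] with t ht
        obtain ⟨ht0, htδ⟩ := ht
        have h1 : |t| < δ := by rw [abs_of_pos ht0]; exact htδ
        have hk := hkey t h1
        rw [hu] at hk
        simp only [zero_add, abs_zero, sub_zero] at hk
        rw [abs_of_pos ht0] at hk
        rw [slope_def_field, sub_zero, le_div_iff₀ ht0]
        nlinarith
      have hle : d ≤ lam * c := by
        have hmono : nhdsWithin (0:ℝ) (Set.Iio 0) ≤ nhdsWithin 0 {(0:ℝ)}ᶜ :=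
          nhdsWithin_mono 0 (fun x hx => ne_of_lt hx)
        refine le_of_tendsto (hslope.mono_left hmono) ?_
        filter_upwards [Ioo_mem_nhdsLT_of_mem
          (Set.right_mem_Ioc.mpr (by linarith : -δ < (0:ℝ)))] with t ht
        obtain ⟨htδ, ht0⟩ := ht
        have h1 : |t| < δ := by rw [abs_of_neg ht0]; linarith
        have hk := hkey t h1
        rw [hu] at hk
        simp only [zero_add, abs_zero, sub_zero] at hk
        rw [abs_of_neg ht0] at hk
        rw [slope_def_field, sub_zero, div_le_iff_of_neg ht0]
        nlinarith
      have habs : |d| ≤ lam * c := abs_le.mpr ⟨hge, hle⟩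
      rw [hdd, abs_mul, abs_of_pos hc] at habs
      nlinarith [hc, abs_nonneg (S i j - Θhat⁻¹ i j)]
  exact st_fixed u (S i j - Θhat⁻¹ i j) lam γ hlam hγ hfinal.1 hfinal.2.1 hfinal.2.2
end

section
/- Fix γ > 0, a matrix Λ ∈ ℝ^{p×p} with positive entries, and a pair of indices (k,l). Let Θ : ℝ → ℝ^{p×p} be a function of the single hyperparameter μ = Λ_{kl} (all other entries of Λ held fixed), differentiable at μ₀ = Λ_{kl} with derivative J ∈ ℝ^{p×p}, such that Θ(μ) is invertible for all μ in a neighborhood of μ₀, and such that for all μ in a neighborhood of μ₀ and all i, j, the fixed-point equation Θ(μ)_{ij} = ST(Θ(μ)_{ij} − γ(S_{ij} − (Θ(μ)⁻¹)_{ij}), γΛ(μ)_{ij}) holds, where Λ(μ) agrees with Λ except Λ(μ)_{kl} = μ. Set Ẑ = Θ(μ₀) − γ(S − Θ(μ₀)⁻¹) and assume |Ẑ_{ij}| ≠ γΛ_{ij} for all i, j. Define M ∈ ℝ^{p×p} by M_{ij} = 1 if |Ẑ_{ij}| > γΛ_{ij} and 0 otherwise, and E ∈ ℝ^{p×p} by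 E_{ij} = −γ·sign(Ẑ_{kl}) if (i,j) = (k,l) and |Ẑ_{kl}| > γΛ_{kl}, and E_{ij} = 0 otherwise. Then J = M ⊙ (J − γ·Θ(μ₀)⁻¹ J Θ(μ₀)⁻¹) + E. -/
open Matrix
open scoped Matrix

private lemma diffAt_det {n : ℕ} (A : ℝ → Matrix (Fin n) (Fin n) ℝ) (x : ℝ)
    (h : ∀ i j, DifferentiableAt ℝ (fun μ => A μ i j) x) :
    DifferentiableAt ℝ (fun μ => (A μ).det) x := by
  simp only [Matrix.det_apply']
  exact DifferentiableAt.fun_sum fun (σ : Equiv.Perm (Fin n)) _ =>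
    (DifferentiableAt.fun_finset_prod (fun i _ => h (σ i) i)).const_mul _

private lemma softThresh_of_abs_le {z τ : ℝ} (h : |z| ≤ τ) : softThresh z τ = 0 := by
  unfold softThresh
  rw [max_eq_right (by linarith), mul_zero]

private lemma softThresh_of_pos {z τ : ℝ} (h : τ < z) (hτ : 0 ≤ τ) :
    softThresh z τ = z - τ := by
  have hz : 0 < z := lt_of_le_of_lt hτ h
  unfold softThresh
  rw [Real.sign_of_pos hz, abs_of_pos hz, max_eq_left (by linarith), one_mul]

private lemma softThresh_of_neg {z τ : ℝ} (h : z < -τ) (hτ : 0 ≤ τ) :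
    softThresh z τ = z + τ := by
  have hz : z < 0 := by linarith
  unfold softThresh
  rw [Real.sign_of_neg hz, abs_of_neg hz, max_eq_left (by linarith)]
  ring

theorem stmt_14 {p : ℕ} (hp : 1 ≤ p) (S : Matrix (Fin p) (Fin p) ℝ) (hS : S.IsSymm)
    (γ : ℝ) (hγ : 0 < γ)
    (Lam : Matrix (Fin p) (Fin p) ℝ) (hLam : ∀ i j, 0 < Lam i j)
    (k l : Fin p)
    (Θ : ℝ → Matrix (Fin p) (Fin p) ℝ) (J : Matrix (Fin p) (Fin p) ℝ)
    (hdiff : ∀ i j, HasDerivAt (fun μ => Θ μ i j) (J i j) (Lam k l))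
    (hinv : ∀ᶠ μ in nhds (Lam k l), IsUnit (Θ μ).det)
    (hfix : ∀ᶠ μ in nhds (Lam k l), ∀ i j,
      Θ μ i j = softThresh (Θ μ i j - γ * (S i j - (Θ μ)⁻¹ i j))
        (γ * if (i, j) = (k, l) then μ else Lam i j))
    (Z : Matrix (Fin p) (Fin p) ℝ) (hZ : Z = Θ (Lam k l) - γ • (S - (Θ (Lam k l))⁻¹))
    (hnd : ∀ i j, |Z i j| ≠ γ * Lam i j)
    (M E : Matrix (Fin p) (Fin p) ℝ)
    (hM : ∀ i j, M i j = if γ * Lam i j < |Z i j| then 1 else 0)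
    (hE : ∀ i j, E i j =
      if (i, j) = (k, l) ∧ γ * Lam k l < |Z k l| then -γ * Real.sign (Z k l) else 0) :
    J = M ⊙ (J - γ • ((Θ (Lam k l))⁻¹ * J * (Θ (Lam k l))⁻¹)) + E := by
  set μ₀ := Lam k l with hμ₀
  set B₀ := (Θ μ₀)⁻¹ with hB₀
  have hu0 : IsUnit (Θ μ₀).det := hinv.self_of_nhds
  have hΘdiff : ∀ i j, DifferentiableAt ℝ (fun μ => Θ μ i j) μ₀ :=
    fun i j => (hdiff i j).differentiableAt
  -- differentiability of entries of the inverse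
  have hBdiff : ∀ i j, DifferentiableAt ℝ (fun μ => (Θ μ)⁻¹ i j) μ₀ := by
    intro i j
    have hdet : DifferentiableAt ℝ (fun μ => (Θ μ).det) μ₀ := diffAt_det _ _ hΘdiff
    have hadj : DifferentiableAt ℝ (fun μ => (Θ μ).adjugate i j) μ₀ := by
      simp only [Matrix.adjugate_apply]
      apply diffAt_det
      intro r s
      by_cases hr : r = j
      · simp only [Matrix.updateRow_apply, hr, if_true]
        exact differentiableAt_const _
      · simp only [Matrix.updateRow_apply, hr, if_false]
        exact hΘdiff r s
    have heq : (fun μ => (Θ μ)⁻¹ i j)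
        = fun μ => ((Θ μ).det)⁻¹ * (Θ μ).adjugate i j := by
      funext μ
      rw [Matrix.inv_def]
      simp [Ring.inverse_eq_inv', Matrix.smul_apply, smul_eq_mul]
    rw [heq]
    exact (hdet.inv hu0.ne_zero).mul hadj
  set B' : Matrix (Fin p) (Fin p) ℝ :=
    Matrix.of (fun i j => deriv (fun μ => (Θ μ)⁻¹ i j) μ₀) with hB'def
  have hB : ∀ i j, HasDerivAt (fun μ => (Θ μ)⁻¹ i j) (B' i j) μ₀ :=
    fun i j => (hBdiff i j).hasDerivAt
  -- differentiating Θ μ * (Θ μ)⁻¹ = 1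
  have key : J * B₀ + Θ μ₀ * B' = 0 := by
    ext i j
    have hprod : HasDerivAt (fun μ => ∑ m, Θ μ i m * (Θ μ)⁻¹ m j)
        (∑ m, (J i m * B₀ m j + Θ μ₀ i m * B' m j)) μ₀ :=
      HasDerivAt.fun_sum fun m _ => (hdiff i m).mul (hB m j)
    have hev : (fun μ => ∑ m, Θ μ i m * (Θ μ)⁻¹ m j)
        =ᶠ[nhds μ₀] fun _ => (1 : Matrix (Fin p) (Fin p) ℝ) i j := by
      filter_upwards [hinv] with μ hu
      rw [← Matrix.mul_apply, Matrix.mul_nonsing_inv _ hu]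
    have h0 : HasDerivAt (fun μ => ∑ m, Θ μ i m * (Θ μ)⁻¹ m j) 0 μ₀ :=
      (hasDerivAt_const μ₀ _).congr_of_eventuallyEq hev
    have := hprod.unique h0
    simpa [Matrix.add_apply, Matrix.mul_apply, Finset.sum_add_distrib,
      Matrix.zero_apply] using this
  have hB'eq : B' = -(B₀ * J * B₀) := by
    have h1 : B₀ * Θ μ₀ = 1 := Matrix.nonsing_inv_mul _ hu0
    have h2 : Θ μ₀ * B' = -(J * B₀) := by
      have := congrArg (fun X => X - J * B₀) key
      simpa [sub_eq_iff_eq_add] using by linear_combination (norm := noncomm_ring) key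
    calc B' = (B₀ * Θ μ₀) * B' := by rw [h1, one_mul]
      _ = B₀ * (Θ μ₀ * B') := by rw [Matrix.mul_assoc]
      _ = B₀ * (-(J * B₀)) := by rw [h2]
      _ = -(B₀ * J * B₀) := by rw [Matrix.mul_neg, Matrix.mul_assoc]
  set W : Matrix (Fin p) (Fin p) ℝ := J - γ • (B₀ * J * B₀) with hW
  -- derivative of the inner argument
  have hZf : ∀ i j, HasDerivAt (fun μ => Θ μ i j - γ * (S i j - (Θ μ)⁻¹ i j)) (W i j) μ₀ := by
    intro i j
    have h1 : HasDerivAt (fun μ => S i j - (Θ μ)⁻¹ i j) (0 - B' i j) μ₀ :=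
      (hasDerivAt_const μ₀ (S i j)).sub (hB i j)
    have h2 := (hdiff i j).fun_sub (h1.const_mul γ)
    refine h2.congr_deriv ?_
    have : B' i j = -(B₀ * J * B₀) i j := by rw [hB'eq]; simp
    simp only [hW, Matrix.sub_apply, Matrix.smul_apply, smul_eq_mul, this]
    ring
  -- value of the inner argument at μ₀
  have hZval : ∀ i j, Z i j = Θ μ₀ i j - γ * (S i j - (Θ μ₀)⁻¹ i j) := by
    intro i j
    rw [hZ]
    simp [Matrix.sub_apply, Matrix.smul_apply, smul_eq_mul, hB₀]
  -- the threshold function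
  ext i j
  have hRHS : (M ⊙ W + E) i j = M i j * W i j + E i j := by
    simp [Matrix.add_apply, Matrix.hadamard_apply]
  rw [hRHS]
  set τf : ℝ → ℝ := fun μ => γ * (if (i, j) = (k, l) then μ else Lam i j) with hτf
  have hτ0 : τf μ₀ = γ * Lam i j := by
    by_cases h : (i, j) = (k, l)
    · obtain ⟨hi, hj⟩ := Prod.mk_inj.mp h
      subst hi; subst hj
      simp [hτf, hμ₀]
    · simp [hτf, h]
  set e : ℝ := if (i, j) = (k, l) then γ else 0 with he
  have hτderiv : HasDerivAt τf e μ₀ := by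
    by_cases h : (i, j) = (k, l)
    · simp only [hτf, he, h, if_true]
      simpa using (hasDerivAt_id μ₀).const_mul γ
    · simp only [hτf, he, h, if_false]
      exact hasDerivAt_const μ₀ _
  have hτcont : ContinuousAt τf μ₀ := hτderiv.continuousAt
  have hZcont : ContinuousAt (fun μ => Θ μ i j - γ * (S i j - (Θ μ)⁻¹ i j)) μ₀ :=
    (hZf i j).continuousAt
  have hτpos : 0 < τf μ₀ := by rw [hτ0]; exact mul_pos hγ (hLam i j)
  have hτev_pos : ∀ᶠ μ in nhds μ₀, 0 < τf μ :=
    (continuousAt_const).eventually_lt hτcont hτpos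
  -- the fixed-point eq as a local statement for entry (i,j)
  have hfix' : ∀ᶠ μ in nhds μ₀, Θ μ i j
      = softThresh (Θ μ i j - γ * (S i j - (Θ μ)⁻¹ i j)) (τf μ) := by
    filter_upwards [hfix] with μ h using h i j
  rcases (hnd i j).lt_or_gt with hlt | hgt
  · -- |Z i j| < γ Λ i j : entry is locally zero
    have hM0 : M i j = 0 := by rw [hM]; rw [if_neg (not_lt.mpr hlt.le)]
    have hE0 : E i j = 0 := by
      rw [hE]
      rw [if_neg]
      rintro ⟨h1, h2⟩
      obtain ⟨hi, hj⟩ := Prod.mk_inj.mp h1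
      subst hi; subst hj
      exact absurd h2 (not_lt.mpr hlt.le)
    have habs : ContinuousAt (fun μ => |Θ μ i j - γ * (S i j - (Θ μ)⁻¹ i j)|) μ₀ :=
      hZcont.abs
    have hval : |Θ μ₀ i j - γ * (S i j - (Θ μ₀)⁻¹ i j)| < τf μ₀ := by
      rw [hτ0, ← hZval i j]; exact hlt
    have hev_lt : ∀ᶠ μ in nhds μ₀,
        |Θ μ i j - γ * (S i j - (Θ μ)⁻¹ i j)| < τf μ :=
      habs.eventually_lt hτcont hval
    have hev0 : (fun μ => Θ μ i j) =ᶠ[nhds μ₀] fun _ => (0 : ℝ) := by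
      filter_upwards [hfix', hev_lt] with μ h1 h2
      rw [h1, softThresh_of_abs_le h2.le]
    have hJ0 : J i j = 0 :=
      (hdiff i j).unique ((hasDerivAt_const μ₀ (0 : ℝ)).congr_of_eventuallyEq hev0)
    rw [hJ0, hM0, hE0]; ring
  · -- γ Λ i j < |Z i j|
    have hM1 : M i j = 1 := by rw [hM, if_pos hgt]
    set s : ℝ := Real.sign (Z i j) with hs
    have hz0 : Z i j ≠ 0 := by
      intro h
      rw [h] at hgt
      simp only [abs_zero] at hgt
      exact absurd hgt (not_lt.mpr (mul_pos hγ (hLam i j)).le)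
    -- eventually Θ μ i j = Zf μ - s * τf μ
    have hev : (fun μ => Θ μ i j)
        =ᶠ[nhds μ₀] fun μ => (Θ μ i j - γ * (S i j - (Θ μ)⁻¹ i j)) - s * τf μ := by
      rcases lt_or_gt_of_ne hz0 with hneg | hpos
      · have hsneg : s = -1 := Real.sign_of_neg hneg
        have hval : Θ μ₀ i j - γ * (S i j - (Θ μ₀)⁻¹ i j) < -τf μ₀ := by
          rw [hτ0, ← hZval i j]
          rw [abs_of_neg hneg] at hgt
          linarith
        have hev_lt : ∀ᶠ μ in nhds μ₀,
            Θ μ i j - γ * (S i j - (Θ μ)⁻¹ i j) < -τf μ :=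
          hZcont.eventually_lt hτcont.neg hval
        filter_upwards [hfix', hev_lt, hτev_pos] with μ h1 h2 h3
        rw [softThresh_of_neg h2 h3.le] at h1
        rw [hsneg]
        linarith [h1]
      · have hspos : s = 1 := Real.sign_of_pos hpos
        have hval : τf μ₀ < Θ μ₀ i j - γ * (S i j - (Θ μ₀)⁻¹ i j) := by
          rw [hτ0, ← hZval i j]
          rw [abs_of_pos hpos] at hgt
          linarith
        have hev_lt : ∀ᶠ μ in nhds μ₀,
            τf μ < Θ μ i j - γ * (S i j - (Θ μ)⁻¹ i j) :=
          hτcont.eventually_lt hZcont hval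
        filter_upwards [hfix', hev_lt, hτev_pos] with μ h1 h2 h3
        rw [softThresh_of_pos h2 h3.le] at h1
        rw [hspos]
        linarith [h1]
    have hd2 : HasDerivAt
        (fun μ => (Θ μ i j - γ * (S i j - (Θ μ)⁻¹ i j)) - s * τf μ)
        (W i j - s * e) μ₀ := (hZf i j).sub (hτderiv.const_mul s)
    have hJval : J i j = W i j - s * e :=
      (hdiff i j).unique (hd2.congr_of_eventuallyEq hev)
    rw [hJval, hM1, hE i j]
    by_cases h : (i, j) = (k, l)
    · obtain ⟨hi, hj⟩ := Prod.mk_inj.mp h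
      subst hi; subst hj
      rw [if_pos ⟨rfl, hgt⟩]
      simp only [he, hs, eq_self_iff_true, if_true]
      ring
    · rw [if_neg (by rintro ⟨h1, _⟩; exact h h1)]
      simp only [he, if_neg h]
      ring
end
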